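/- Let α > 0, β > 0 with α ≠ β. Define the measure π on [0,∞) × {0,1} by π(ds, 0) = (β/(α+β)) · (αβ/(α−β)) (e^{−βs} − e^{−αs}) ds and π(ds, 1) = (α/(α+β)) · β e^{−βs} ds, where ds is Lebesgue measure on [0,∞). Then π is a probability measure, and for every function f : [0,∞) × {0,1} → ℝ that is bounded, continuously differentiable in the first variable with bounded derivative ∂_s f, one has ∫ [ β·1_{v=1}·(f(s,0) − f(s,1)) + α·1_{v=0}·(f(0,1) − f(s,0)) + ∂_s f(s,v) ] π(ds,dv) = 0. -/

import Mathlib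

open MeasureTheory
open scoped ENNReal

open Set Real Filter in
private lemma intOn_mul_exp {b M : ℝ} (hb : 0 < b) {g : ℝ → ℝ} (hg : Continuous g)
    (hM : ∀ s, |g s| ≤ M) :
    IntegrableOn (fun s => g s * Real.exp (-b * s)) (Set.Ioi 0) := by
  have hexp := exp_neg_integrableOn_Ioi (0 : ℝ) hb
  refine (hexp.const_mul M).mono'
    ((hg.mul (Real.continuous_exp.comp (continuous_const.mul continuous_id))).aestronglyMeasurable)
    (Filter.Eventually.of_forall fun s => ?_)
  have he := Real.exp_pos (-b * s)
  rw [Real.norm_eq_abs, abs_mul, abs_of_pos he]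
  exact mul_le_mul_of_nonneg_right (hM s) he.le

open Set Real Filter in
private lemma ibp_exp {b M : ℝ} (hb : 0 < b) {g g' : ℝ → ℝ}
    (hd : ∀ s, HasDerivAt g (g' s) s) (hc' : Continuous g')
    (hgM : ∀ s, |g s| ≤ M) (hg'M : ∀ s, |g' s| ≤ M) :
    ∫ s in Set.Ioi (0:ℝ), g' s * Real.exp (-b * s)
      = b * (∫ s in Set.Ioi (0:ℝ), g s * Real.exp (-b * s)) - g 0 := by
  have hcg : Continuous g := continuous_iff_continuousAt.2 fun s => (hd s).continuousAt
  have hint1 := intOn_mul_exp hb hcg hgM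
  have hint2 := intOn_mul_exp hb hc' hg'M
  have hF' : ∀ s, HasDerivAt (fun u => g u * Real.exp (-b * u))
      (g' s * Real.exp (-b * s) - b * (g s * Real.exp (-b * s))) s := by
    intro s
    have h1 : HasDerivAt (fun u : ℝ => Real.exp (-b * u)) (Real.exp (-b * s) * (-b * 1)) s :=
      ((hasDerivAt_id s).const_mul (-b)).exp
    have h2 := (hd s).mul h1
    exact h2.congr_deriv (by ring)
  have htend : Tendsto (fun s => g s * Real.exp (-b * s)) atTop (nhds 0) := by
    have h1 : Tendsto (fun s : ℝ => b * s) atTop atTop :=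
      Tendsto.const_mul_atTop hb tendsto_id
    have h2 : Tendsto (fun s : ℝ => M * Real.exp (-(b * s))) atTop (nhds (M * 0)) :=
      (Real.tendsto_exp_neg_atTop_nhds_zero.comp h1).const_mul M
    rw [mul_zero] at h2
    refine squeeze_zero_norm (fun s => ?_) h2
    rw [Real.norm_eq_abs, abs_mul, neg_mul, abs_of_pos (Real.exp_pos _)]
    exact mul_le_mul_of_nonneg_right (hgM s) (Real.exp_pos _).le
  have hint3 : IntegrableOn
      (fun s => g' s * Real.exp (-b * s) - b * (g s * Real.exp (-b * s))) (Set.Ioi 0) :=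
    hint2.sub (hint1.const_mul b)
  have hFc : Continuous fun s : ℝ => g s * Real.exp (-b * s) := by fun_prop
  have key := integral_Ioi_of_hasDerivAt_of_tendsto
    hFc.continuousWithinAt (fun x _ => hF' x) hint3 htend
  rw [integral_sub hint2 (hint1.const_mul b), integral_const_mul] at key
  simp only [mul_zero, neg_zero, Real.exp_zero, mul_one, zero_sub] at key
  linarith

private lemma integral_exp_Ioi {b : ℝ} (hb : 0 < b) :
    ∫ s in Set.Ioi (0:ℝ), Real.exp (-b * s) = 1 / b := by
  have h := ibp_exp (g := fun _ => 1) (g' := fun _ => 0) (M := 1) hb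
    (fun s => hasDerivAt_const s 1) continuous_const (by norm_num) (by norm_num)
  simp only [zero_mul, one_mul, integral_zero] at h
  rw [eq_div_iff hb.ne']
  linear_combination -h

private lemma integral_comb6 {μ : Measure ℝ} {u1 u2 u3 u4 u5 u6 : ℝ → ℝ}
    (h1 : Integrable u1 μ) (h2 : Integrable u2 μ) (h3 : Integrable u3 μ)
    (h4 : Integrable u4 μ) (h5 : Integrable u5 μ) (h6 : Integrable u6 μ)
    (a1 a2 a3 a4 a5 a6 : ℝ) :
    ∫ s, (a1 * u1 s + a2 * u2 s + a3 * u3 s + a4 * u4 s + a5 * u5 s + a6 * u6 s) ∂μ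
      = a1 * ∫ s, u1 s ∂μ + a2 * ∫ s, u2 s ∂μ + a3 * ∫ s, u3 s ∂μ
        + a4 * ∫ s, u4 s ∂μ + a5 * ∫ s, u5 s ∂μ + a6 * ∫ s, u6 s ∂μ := by
  have A1 := h1.const_mul a1
  have A2 := h2.const_mul a2
  have A3 := h3.const_mul a3
  have A4 := h4.const_mul a4
  have A5 := h5.const_mul a5
  have A6 := h6.const_mul a6
  have B2 : Integrable (fun s => a1 * u1 s + a2 * u2 s) μ := A1.add A2
  have B3 : Integrable (fun s => a1 * u1 s + a2 * u2 s + a3 * u3 s) μ := B2.add A3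
  have B4 : Integrable (fun s => a1 * u1 s + a2 * u2 s + a3 * u3 s + a4 * u4 s) μ := B3.add A4
  have B5 : Integrable
      (fun s => a1 * u1 s + a2 * u2 s + a3 * u3 s + a4 * u4 s + a5 * u5 s) μ := B4.add A5
  have e6 : ∫ s, (a1 * u1 s + a2 * u2 s + a3 * u3 s + a4 * u4 s + a5 * u5 s + a6 * u6 s) ∂μ
      = (∫ s, (a1 * u1 s + a2 * u2 s + a3 * u3 s + a4 * u4 s + a5 * u5 s) ∂μ)
        + ∫ s, a6 * u6 s ∂μ := integral_add B5 A6
  have e5 : ∫ s, (a1 * u1 s + a2 * u2 s + a3 * u3 s + a4 * u4 s + a5 * u5 s) ∂μ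
      = (∫ s, (a1 * u1 s + a2 * u2 s + a3 * u3 s + a4 * u4 s) ∂μ)
        + ∫ s, a5 * u5 s ∂μ := integral_add B4 A5
  have e4 : ∫ s, (a1 * u1 s + a2 * u2 s + a3 * u3 s + a4 * u4 s) ∂μ
      = (∫ s, (a1 * u1 s + a2 * u2 s + a3 * u3 s) ∂μ) + ∫ s, a4 * u4 s ∂μ := integral_add B3 A4
  have e3 : ∫ s, (a1 * u1 s + a2 * u2 s + a3 * u3 s) ∂μ
      = (∫ s, (a1 * u1 s + a2 * u2 s) ∂μ) + ∫ s, a3 * u3 s ∂μ := integral_add B2 A3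
  have e2 : ∫ s, (a1 * u1 s + a2 * u2 s) ∂μ
      = (∫ s, a1 * u1 s ∂μ) + ∫ s, a2 * u2 s ∂μ := integral_add A1 A2
  rw [e6, e5, e4, e3, e2, integral_const_mul, integral_const_mul, integral_const_mul,
    integral_const_mul, integral_const_mul, integral_const_mul]

private lemma integrable_comb6 {μ : Measure ℝ} {u1 u2 u3 u4 u5 u6 : ℝ → ℝ}
    (h1 : Integrable u1 μ) (h2 : Integrable u2 μ) (h3 : Integrable u3 μ)
    (h4 : Integrable u4 μ) (h5 : Integrable u5 μ) (h6 : Integrable u6 μ)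
    (a1 a2 a3 a4 a5 a6 : ℝ) :
    Integrable (fun s => a1 * u1 s + a2 * u2 s + a3 * u3 s + a4 * u4 s
      + a5 * u5 s + a6 * u6 s) μ := by
  have B2 : Integrable (fun s => a1 * u1 s + a2 * u2 s) μ :=
    (h1.const_mul a1).add (h2.const_mul a2)
  have B3 : Integrable (fun s => a1 * u1 s + a2 * u2 s + a3 * u3 s) μ :=
    B2.add (h3.const_mul a3)
  have B4 : Integrable (fun s => a1 * u1 s + a2 * u2 s + a3 * u3 s + a4 * u4 s) μ :=
    B3.add (h4.const_mul a4)
  have B5 : Integrable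
      (fun s => a1 * u1 s + a2 * u2 s + a3 * u3 s + a4 * u4 s + a5 * u5 s) μ :=
    B4.add (h5.const_mul a5)
  exact B5.add (h6.const_mul a6)

set_option maxHeartbeats 2000000 in
theorem invariant_measure_two_state_process
    (α β : ℝ) (hα : 0 < α) (hβ : 0 < β) (hαβ : α ≠ β)
    (π : Measure (ℝ × Bool))
    (hπ : π =
      ((volume.restrict (Set.Ici (0 : ℝ))).withDensity
          (fun s => ENNReal.ofReal
            ((β / (α + β)) * (α * β / (α - β)) * (Real.exp (-β * s) - Real.exp (-α * s))))).map
        (fun s => (s, false))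
      +
      ((volume.restrict (Set.Ici (0 : ℝ))).withDensity
          (fun s => ENNReal.ofReal
            ((α / (α + β)) * (β * Real.exp (-β * s))))).map
        (fun s => (s, true))) :
    IsProbabilityMeasure π ∧
    ∀ f f' : ℝ → Bool → ℝ,
      (∀ v s, HasDerivAt (fun u => f u v) (f' s v) s) →
      (∀ v, Continuous (fun s => f' s v)) →
      (∃ M : ℝ, ∀ s v, |f s v| ≤ M ∧ |f' s v| ≤ M) →
      ∫ p : ℝ × Bool,
          (β * (if p.2 then (1 : ℝ) else 0) * (f p.1 false - f p.1 true)
            + α * (if p.2 then (0 : ℝ) else 1) * (f 0 true - f p.1 false)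
            + f' p.1 p.2) ∂π = 0 := by
  have hsum : (0:ℝ) < α + β := by linarith
  have hne : α - β ≠ 0 := sub_ne_zero.2 hαβ
  have hnn0 : ∀ s ∈ Set.Ici (0:ℝ),
      0 ≤ β / (α + β) * (α * β / (α - β)) * (Real.exp (-β * s) - Real.exp (-α * s)) := by
    intro s hs
    have hs0 : (0:ℝ) ≤ s := hs
    have h1 : 0 < β / (α + β) := div_pos hβ hsum
    rcases lt_or_gt_of_ne hαβ with h | h
    · have h2 : α * β / (α - β) ≤ 0 :=
        (div_neg_of_pos_of_neg (mul_pos hα hβ) (by linarith)).le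
      have h3 : Real.exp (-β * s) - Real.exp (-α * s) ≤ 0 := by
        have := Real.exp_le_exp.2 (show -β * s ≤ -α * s by nlinarith)
        linarith
      nlinarith [mul_nonneg (neg_nonneg.2 h2) (neg_nonneg.2 h3)]
    · have h2 : 0 ≤ α * β / (α - β) := (div_pos (mul_pos hα hβ) (by linarith)).le
      have h3 : 0 ≤ Real.exp (-β * s) - Real.exp (-α * s) := by
        have := Real.exp_le_exp.2 (show -α * s ≤ -β * s by nlinarith)
        linarith
      exact mul_nonneg (mul_nonneg h1.le h2) h3
  have hnn1 : ∀ s : ℝ, 0 ≤ α / (α + β) * (β * Real.exp (-β * s)) := by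
    intro s; positivity
  have hIb : IntegrableOn (fun s => Real.exp (-β * s)) (Set.Ioi (0:ℝ)) :=
    exp_neg_integrableOn_Ioi 0 hβ
  have hIa : IntegrableOn (fun s => Real.exp (-α * s)) (Set.Ioi (0:ℝ)) :=
    exp_neg_integrableOn_Ioi 0 hα
  have hEb : ∫ s in Set.Ioi (0:ℝ), Real.exp (-β * s) = 1 / β := integral_exp_Ioi hβ
  have hEa : ∫ s in Set.Ioi (0:ℝ), Real.exp (-α * s) = 1 / α := integral_exp_Ioi hα
  have hint0 : IntegrableOn
      (fun s => β / (α + β) * (α * β / (α - β)) * (Real.exp (-β * s) - Real.exp (-α * s)))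
      (Set.Ici (0:ℝ)) :=
    (integrableOn_Ici_iff_integrableOn_Ioi (hb := enorm_ne_top)).2 ((hIb.sub hIa).const_mul _)
  have hint1 : IntegrableOn (fun s => α / (α + β) * (β * Real.exp (-β * s)))
      (Set.Ici (0:ℝ)) :=
    (integrableOn_Ici_iff_integrableOn_Ioi (hb := enorm_ne_top)).2 ((hIb.const_mul β).const_mul _)
  have hval0 : ∫ s in Set.Ici (0:ℝ),
      β / (α + β) * (α * β / (α - β)) * (Real.exp (-β * s) - Real.exp (-α * s))
        = β / (α + β) := by
    rw [integral_Ici_eq_integral_Ioi, integral_const_mul, integral_sub hIb hIa, hEb, hEa]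
    field_simp
  have hval1 : ∫ s in Set.Ici (0:ℝ), α / (α + β) * (β * Real.exp (-β * s)) = α / (α + β) := by
    rw [integral_Ici_eq_integral_Ioi, integral_const_mul, integral_const_mul, hEb]
    field_simp
  have hm0 : Measurable (fun s : ℝ => (s, false)) := measurable_id.prodMk measurable_const
  have hm1 : Measurable (fun s : ℝ => (s, true)) := measurable_id.prodMk measurable_const
  have hprob : IsProbabilityMeasure π := by
    constructor
    rw [hπ]
    rw [Measure.add_apply, Measure.map_apply hm0 MeasurableSet.univ,
      Measure.map_apply hm1 MeasurableSet.univ, Set.preimage_univ, Set.preimage_univ,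
      withDensity_apply _ MeasurableSet.univ, withDensity_apply _ MeasurableSet.univ,
      Measure.restrict_univ,
      ← ofReal_integral_eq_lintegral_ofReal hint0
        ((ae_restrict_iff' measurableSet_Ici).2 (ae_of_all _ hnn0)),
      ← ofReal_integral_eq_lintegral_ofReal hint1
        ((ae_restrict_iff' measurableSet_Ici).2 (ae_of_all _ (fun s _ => hnn1 s))),
      hval0, hval1, ← ENNReal.ofReal_add (by positivity) (by positivity),
      show β / (α + β) + α / (α + β) = 1 by
        rw [← add_div, add_comm]; exact div_self hsum.ne']
    exact ENNReal.ofReal_one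
  refine ⟨hprob, ?_⟩
  intro f f' hderiv hc' hbdd
  obtain ⟨M, hM⟩ := hbdd
  have hfc : ∀ v, Continuous fun s => f s v :=
    fun v => continuous_iff_continuousAt.2 fun s => (hderiv v s).continuousAt
  set F : ℝ × Bool → ℝ := fun p =>
    β * (if p.2 then (1:ℝ) else 0) * (f p.1 false - f p.1 true)
      + α * (if p.2 then (0:ℝ) else 1) * (f 0 true - f p.1 false) + f' p.1 p.2 with hF
  have hFfalse : ∀ s, F (s, false) = α * (f 0 true - f s false) + f' s false := by
    intro s; simp [hF]
  have hFtrue : ∀ s, F (s, true) = β * (f s false - f s true) + f' s true := by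
    intro s; simp [hF]
  have hFsm : StronglyMeasurable F := by
    have hc1 : Continuous fun s : ℝ => β * (f s false - f s true) + f' s true :=
      (continuous_const.mul ((hfc false).sub (hfc true))).add (hc' true)
    have hc0 : Continuous fun s : ℝ => α * (f 0 true - f s false) + f' s false :=
      (continuous_const.mul (continuous_const.sub (hfc false))).add (hc' false)
    have hFeq : F = fun p : ℝ × Bool =>
        if p.2 = true then β * (f p.1 false - f p.1 true) + f' p.1 true
        else α * (f 0 true - f p.1 false) + f' p.1 false := by
      funext p
      rcases p with ⟨s, v⟩
      cases v
      · rw [hFfalse]; simp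
      · rw [hFtrue]; simp
    rw [hFeq]
    exact (Measurable.ite (measurable_snd (measurableSet_singleton true))
      ((hc1.comp continuous_fst).measurable)
      ((hc0.comp continuous_fst).measurable)).stronglyMeasurable
  have hg0M : ∀ s, |f s false| ≤ M := fun s => (hM s false).1
  have hg1M : ∀ s, |f s true| ≤ M := fun s => (hM s true).1
  have hd0M : ∀ s, |f' s false| ≤ M := fun s => (hM s false).2
  have hd1M : ∀ s, |f' s true| ≤ M := fun s => (hM s true).2
  have hP1 : IntegrableOn (fun s => f s false * Real.exp (-β * s)) (Set.Ioi (0:ℝ)) :=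
    intOn_mul_exp hβ (hfc false) hg0M
  have hP2 : IntegrableOn (fun s => f s false * Real.exp (-α * s)) (Set.Ioi (0:ℝ)) :=
    intOn_mul_exp hα (hfc false) hg0M
  have hP3 : IntegrableOn (fun s => f s true * Real.exp (-β * s)) (Set.Ioi (0:ℝ)) :=
    intOn_mul_exp hβ (hfc true) hg1M
  have hP4 : IntegrableOn (fun s => f' s false * Real.exp (-β * s)) (Set.Ioi (0:ℝ)) :=
    intOn_mul_exp hβ (hc' false) hd0M
  have hP5 : IntegrableOn (fun s => f' s false * Real.exp (-α * s)) (Set.Ioi (0:ℝ)) :=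
    intOn_mul_exp hα (hc' false) hd0M
  have hP6 : IntegrableOn (fun s => f' s true * Real.exp (-β * s)) (Set.Ioi (0:ℝ)) :=
    intOn_mul_exp hβ (hc' true) hd1M
  have hJ1 : ∫ s in Set.Ioi (0:ℝ), f' s false * Real.exp (-β * s)
      = β * (∫ s in Set.Ioi (0:ℝ), f s false * Real.exp (-β * s)) - f 0 false :=
    ibp_exp hβ (hderiv false) (hc' false) hg0M hd0M
  have hJ2 : ∫ s in Set.Ioi (0:ℝ), f' s false * Real.exp (-α * s)
      = α * (∫ s in Set.Ioi (0:ℝ), f s false * Real.exp (-α * s)) - f 0 false :=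
    ibp_exp hα (hderiv false) (hc' false) hg0M hd0M
  have hJ3 : ∫ s in Set.Ioi (0:ℝ), f' s true * Real.exp (-β * s)
      = β * (∫ s in Set.Ioi (0:ℝ), f s true * Real.exp (-β * s)) - f 0 true :=
    ibp_exp hβ (hderiv true) (hc' true) hg1M hd1M
  have hd0meas : Measurable fun s : ℝ =>
      (β / (α + β) * (α * β / (α - β)) * (Real.exp (-β * s) - Real.exp (-α * s))).toNNReal :=
    (continuous_real_toNNReal.comp (by fun_prop)).measurable
  have hd1meas : Measurable fun s : ℝ =>
      (α / (α + β) * (β * Real.exp (-β * s))).toNNReal :=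
    (continuous_real_toNNReal.comp (by fun_prop)).measurable
  have hrfl0 : (fun s : ℝ => ENNReal.ofReal
      (β / (α + β) * (α * β / (α - β)) * (Real.exp (-β * s) - Real.exp (-α * s))))
      = fun s : ℝ => ((β / (α + β) * (α * β / (α - β))
          * (Real.exp (-β * s) - Real.exp (-α * s))).toNNReal : ℝ≥0∞) := rfl
  have hrfl1 : (fun s : ℝ => ENNReal.ofReal (α / (α + β) * (β * Real.exp (-β * s))))
      = fun s : ℝ => ((α / (α + β) * (β * Real.exp (-β * s))).toNNReal : ℝ≥0∞) := rfl
  have hcong0 : (fun s => (β / (α + β) * (α * β / (α - β))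
        * (Real.exp (-β * s) - Real.exp (-α * s))).toNNReal • F (s, false))
      =ᶠ[ae (volume.restrict (Set.Ici (0:ℝ)))] fun s => (β / (α + β) * (α * β / (α - β)) * (α * f 0 true)) * Real.exp (-β * s)
          + (-(β / (α + β) * (α * β / (α - β)) * (α * f 0 true))) * Real.exp (-α * s)
          + (-(β / (α + β) * (α * β / (α - β)) * α)) * (f s false * Real.exp (-β * s))
          + (β / (α + β) * (α * β / (α - β)) * α) * (f s false * Real.exp (-α * s))
          + (β / (α + β) * (α * β / (α - β))) * (f' s false * Real.exp (-β * s))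
          + (-(β / (α + β) * (α * β / (α - β)))) * (f' s false * Real.exp (-α * s)) := by
    refine (ae_restrict_iff' measurableSet_Ici).2 (ae_of_all _ fun s hs => ?_)
    simp only [NNReal.smul_def, smul_eq_mul, Real.coe_toNNReal _ (hnn0 s hs), hFfalse]
    ring
  have hcong1 : (fun s => (α / (α + β) * (β * Real.exp (-β * s))).toNNReal • F (s, true))
      =ᶠ[ae (volume.restrict (Set.Ici (0:ℝ)))] fun s => (0:ℝ) * Real.exp (-β * s)
          + (α / (α + β) * β * β) * (f s false * Real.exp (-β * s))
          + (-(α / (α + β) * β * β)) * (f s true * Real.exp (-β * s))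
          + (α / (α + β) * β) * (f' s true * Real.exp (-β * s))
          + (0:ℝ) * Real.exp (-β * s) + (0:ℝ) * Real.exp (-β * s) := by
    refine ae_of_all _ fun s => ?_
    simp only [NNReal.smul_def, smul_eq_mul, Real.coe_toNNReal _ (hnn1 s), hFtrue]
    ring
  have hQ1 := (integrableOn_Ici_iff_integrableOn_Ioi (hb := enorm_ne_top)).2 hIb
  have hQ2 := (integrableOn_Ici_iff_integrableOn_Ioi (hb := enorm_ne_top)).2 hIa
  have hQ3 := (integrableOn_Ici_iff_integrableOn_Ioi (hb := enorm_ne_top)).2 hP1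
  have hQ4 := (integrableOn_Ici_iff_integrableOn_Ioi (hb := enorm_ne_top)).2 hP2
  have hQ5 := (integrableOn_Ici_iff_integrableOn_Ioi (hb := enorm_ne_top)).2 hP4
  have hQ6 := (integrableOn_Ici_iff_integrableOn_Ioi (hb := enorm_ne_top)).2 hP5
  have hQ7 := (integrableOn_Ici_iff_integrableOn_Ioi (hb := enorm_ne_top)).2 hP3
  have hQ8 := (integrableOn_Ici_iff_integrableOn_Ioi (hb := enorm_ne_top)).2 hP6
  have hIone : Integrable F
      (((volume.restrict (Set.Ici (0:ℝ))).withDensity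
        (fun s => ENNReal.ofReal
          (β / (α + β) * (α * β / (α - β)) * (Real.exp (-β * s) - Real.exp (-α * s))))).map
        (fun s => (s, false))) := by
    rw [integrable_map_measure hFsm.aestronglyMeasurable hm0.aemeasurable, hrfl0,
      integrable_withDensity_iff_integrable_smul hd0meas]
    exact (integrable_comb6 hQ1 hQ2 hQ3 hQ4 hQ5 hQ6 _ _ _ _ _ _).congr hcong0.symm
  have hItwo : Integrable F
      (((volume.restrict (Set.Ici (0:ℝ))).withDensity
        (fun s => ENNReal.ofReal (α / (α + β) * (β * Real.exp (-β * s))))).map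
        (fun s => (s, true))) := by
    rw [integrable_map_measure hFsm.aestronglyMeasurable hm1.aemeasurable, hrfl1,
      integrable_withDensity_iff_integrable_smul hd1meas]
    exact (integrable_comb6 hQ1 hQ3 hQ7 hQ8 hQ1 hQ1 _ _ _ _ _ _).congr hcong1.symm
  rw [hπ, integral_add_measure hIone hItwo,
    integral_map hm0.aemeasurable hFsm.aestronglyMeasurable,
    integral_map hm1.aemeasurable hFsm.aestronglyMeasurable, hrfl0, hrfl1,
    integral_withDensity_eq_integral_smul hd0meas,
    integral_withDensity_eq_integral_smul hd1meas,
    integral_congr_ae hcong0, integral_congr_ae hcong1,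
    integral_Ici_eq_integral_Ioi, integral_Ici_eq_integral_Ioi,
    integral_comb6 hIb hIa hP1 hP2 hP4 hP5 _ _ _ _ _ _,
    integral_comb6 hIb hP1 hP3 hP6 hIb hIb _ _ _ _ _ _,
    hEb, hEa, hJ1, hJ2, hJ3]
  field_simp
  ring
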